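/- arXiv:0911.0257 — 2 statements merged into one kernel-verified Lean document; each statement's English description precedes it below -/
import Mathlib

section
/- The function F : S → ℝ defined on the unit simplex S = {c ∈ ℝᵏ : cᵢ ≥ 0, Σ cᵢ = 1} by F(c₁,…,c_k) = W_p^p(μ, Σᵢ cᵢ δ_{xᵢ}) (the p-th power of the Wasserstein distance from μ to the atomic measure with weights cᵢ at fixed points xᵢ) is convex in (c₁,…,c_k). -/
open MeasureTheory

/-- `W_p^p(μ, Σᵢ cᵢ δ_{xᵢ})` as a function of the weights `c`, defined via the
Kantorovich infimum over couplings. -/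
noncomputable def WppAtomic {n k : ℕ} (μ : Measure (EuclideanSpace ℝ (Fin n)))
    (p : ℝ) (x : Fin k → EuclideanSpace ℝ (Fin n)) (c : Fin k → ℝ) : ℝ :=
  (sInf {I : ENNReal | ∃ γ : Measure (EuclideanSpace ℝ (Fin n) × EuclideanSpace ℝ (Fin n)),
      γ.map Prod.fst = μ ∧
      γ.map Prod.snd = ∑ i : Fin k, ENNReal.ofReal (c i) • Measure.dirac (x i) ∧
      I = ∫⁻ q, ENNReal.ofReal (dist q.1 q.2 ^ p) ∂γ}).toReal

/-- The set of transport costs of couplings between `μ` and the atomic measure. -/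
noncomputable def WppSet {n k : ℕ} (μ : Measure (EuclideanSpace ℝ (Fin n)))
    (p : ℝ) (x : Fin k → EuclideanSpace ℝ (Fin n)) (c : Fin k → ℝ) : Set ENNReal :=
  {I : ENNReal | ∃ γ : Measure (EuclideanSpace ℝ (Fin n) × EuclideanSpace ℝ (Fin n)),
      γ.map Prod.fst = μ ∧
      γ.map Prod.snd = ∑ i : Fin k, ENNReal.ofReal (c i) • Measure.dirac (x i) ∧
      I = ∫⁻ q, ENNReal.ofReal (dist q.1 q.2 ^ p) ∂γ}

lemma WppAtomic_eq {n k : ℕ} (μ : Measure (EuclideanSpace ℝ (Fin n)))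
    (p : ℝ) (x : Fin k → EuclideanSpace ℝ (Fin n)) (c : Fin k → ℝ) :
    WppAtomic μ p x c = (sInf (WppSet μ p x c)).toReal := rfl

lemma nu_prob {n k : ℕ} (x : Fin k → EuclideanSpace ℝ (Fin n)) (c : Fin k → ℝ)
    (hc : c ∈ stdSimplex ℝ (Fin k)) :
    IsProbabilityMeasure (∑ i : Fin k, ENNReal.ofReal (c i) • Measure.dirac (x i)) := by
  constructor
  simp only [Measure.coe_finset_sum, Finset.sum_apply, Measure.coe_smul, Pi.smul_apply,
    MeasureTheory.measure_univ, smul_eq_mul, mul_one]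
  rw [← ENNReal.ofReal_sum_of_nonneg (fun i _ => hc.1 i)]
  simp [hc.2]

/-- Finiteness: the product coupling has cost at most `(diam Ω)^p`. -/
lemma WppSet_sInf_le {n k : ℕ} (Ω : Set (EuclideanSpace ℝ (Fin n))) (hΩ : IsCompact Ω)
    (p : ℝ) (hp : 1 ≤ p) (μ : Measure (EuclideanSpace ℝ (Fin n))) [IsProbabilityMeasure μ]
    (hμΩ : μ Ω = 1)
    (x : Fin k → EuclideanSpace ℝ (Fin n)) (hx : ∀ i, x i ∈ Ω)
    (c : Fin k → ℝ) (hc : c ∈ stdSimplex ℝ (Fin k)) :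
    sInf (WppSet μ p x c) ≤ ENNReal.ofReal (Metric.diam Ω ^ p) := by
  set ν := ∑ i : Fin k, ENNReal.ofReal (c i) • Measure.dirac (x i) with hν
  have : IsProbabilityMeasure ν := nu_prob x c hc
  have hΩm : MeasurableSet Ω := hΩ.isClosed.measurableSet
  have hμc : μ Ωᶜ = 0 := by
    rw [measure_compl hΩm (measure_ne_top μ Ω), hμΩ, measure_univ, tsub_self]
  have hνc : ν Ωᶜ = 0 := by
    simp only [hν, Measure.coe_finset_sum, Finset.sum_apply, Measure.coe_smul, Pi.smul_apply,
      smul_eq_mul]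
    refine Finset.sum_eq_zero fun i _ => ?_
    rw [Measure.dirac_apply' _ hΩm.compl]
    simp [hx i]
  have hmem : (∫⁻ q, ENNReal.ofReal (dist q.1 q.2 ^ p) ∂(μ.prod ν)) ∈ WppSet μ p x c := by
    refine ⟨μ.prod ν, ?_, ?_, rfl⟩
    · rw [Measure.map_fst_prod]; simp
    · rw [Measure.map_snd_prod]; simp [hν]
  refine le_trans (sInf_le hmem) ?_
  have hae : ∀ᵐ q ∂(μ.prod ν), ENNReal.ofReal (dist q.1 q.2 ^ p) ≤
      ENNReal.ofReal (Metric.diam Ω ^ p) := by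
    have hbad : (μ.prod ν) {q : EuclideanSpace ℝ (Fin n) × EuclideanSpace ℝ (Fin n) |
        ¬(q.1 ∈ Ω ∧ q.2 ∈ Ω)} = 0 := by
      have hsub : {q : EuclideanSpace ℝ (Fin n) × EuclideanSpace ℝ (Fin n) |
          ¬(q.1 ∈ Ω ∧ q.2 ∈ Ω)} ⊆ (Ωᶜ ×ˢ Set.univ) ∪ (Set.univ ×ˢ Ωᶜ) := by
        intro q hq
        simp only [Set.mem_setOf_eq, not_and_or] at hq
        rcases hq with h | h
        · exact Or.inl ⟨h, Set.mem_univ _⟩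
        · exact Or.inr ⟨Set.mem_univ _, h⟩
      refine le_antisymm (le_trans (measure_mono hsub) ?_) zero_le
      refine le_trans (measure_union_le _ _) ?_
      rw [Measure.prod_prod, Measure.prod_prod, hμc, hνc]
      simp
    have : ∀ᵐ q ∂(μ.prod ν), q.1 ∈ Ω ∧ q.2 ∈ Ω := by
      rw [MeasureTheory.ae_iff]; exact hbad
    filter_upwards [this] with q hq
    refine ENNReal.ofReal_le_ofReal ?_
    refine Real.rpow_le_rpow dist_nonneg (Metric.dist_le_diam_of_mem hΩ.isBounded hq.1 hq.2)
      (by linarith)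
  calc ∫⁻ q, ENNReal.ofReal (dist q.1 q.2 ^ p) ∂(μ.prod ν)
      ≤ ∫⁻ _, ENNReal.ofReal (Metric.diam Ω ^ p) ∂(μ.prod ν) := lintegral_mono_ae hae
    _ = ENNReal.ofReal (Metric.diam Ω ^ p) := by simp

/-- Convex combination of couplings is a coupling for the convex combination of targets. -/
lemma comb_mem {n k : ℕ} (μ : Measure (EuclideanSpace ℝ (Fin n)))
    (p : ℝ) (x : Fin k → EuclideanSpace ℝ (Fin n))
    {c d : Fin k → ℝ} (hc : ∀ i, 0 ≤ c i) (hd : ∀ i, 0 ≤ d i) {t s : ℝ}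
    (ht : 0 ≤ t) (hs : 0 ≤ s) (hts : t + s = 1)
    {I J : ENNReal} (hI : I ∈ WppSet μ p x c) (hJ : J ∈ WppSet μ p x d) :
    ENNReal.ofReal t * I + ENNReal.ofReal s * J ∈ WppSet μ p x (t • c + s • d) := by
  obtain ⟨γ₁, h1f, h1s, h1I⟩ := hI
  obtain ⟨γ₂, h2f, h2s, h2I⟩ := hJ
  refine ⟨ENNReal.ofReal t • γ₁ + ENNReal.ofReal s • γ₂, ?_, ?_, ?_⟩
  · rw [Measure.map_add _ _ measurable_fst, Measure.map_smul, Measure.map_smul, h1f, h2f,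
      ← add_smul, ← ENNReal.ofReal_add ht hs, hts]
    simp
  · rw [Measure.map_add _ _ measurable_snd, Measure.map_smul, Measure.map_smul, h1s, h2s,
      Finset.smul_sum, Finset.smul_sum, ← Finset.sum_add_distrib]
    refine Finset.sum_congr rfl fun i _ => ?_
    rw [smul_smul, smul_smul, ← add_smul, ← ENNReal.ofReal_mul ht, ← ENNReal.ofReal_mul hs,
      ← ENNReal.ofReal_add (mul_nonneg ht (hc i)) (mul_nonneg hs (hd i))]
    simp [mul_comm]
  · rw [lintegral_add_measure, lintegral_smul_measure, lintegral_smul_measure, h1I, h2I]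
    simp only [smul_eq_mul]

/-- The function `F(c) = W_p^p(μ, Σᵢ cᵢ δ_{xᵢ})` is convex on the unit simplex. -/
theorem WppAtomic_convexOn
    {n k : ℕ} (Ω : Set (EuclideanSpace ℝ (Fin n))) (hΩ : IsCompact Ω)
    (p : ℝ) (hp : 1 ≤ p)
    (μ : Measure (EuclideanSpace ℝ (Fin n))) [IsProbabilityMeasure μ] (hμΩ : μ Ω = 1)
    (x : Fin k → EuclideanSpace ℝ (Fin n)) (hx : ∀ i, x i ∈ Ω) :
    ConvexOn ℝ (stdSimplex ℝ (Fin k)) (WppAtomic μ p x) := by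
  refine ⟨convex_stdSimplex ℝ (Fin k), fun c hc d hd t s ht hs hts => ?_⟩
  set A := sInf (WppSet μ p x c) with hA
  set B := sInf (WppSet μ p x d) with hB
  have hAfin : A ≠ ⊤ :=
    ne_top_of_le_ne_top ENNReal.ofReal_ne_top (WppSet_sInf_le Ω hΩ p hp μ hμΩ x hx c hc)
  have hBfin : B ≠ ⊤ :=
    ne_top_of_le_ne_top ENNReal.ofReal_ne_top (WppSet_sInf_le Ω hΩ p hp μ hμΩ x hx d hd)
  have h1 : ENNReal.ofReal t + ENNReal.ofReal s = 1 := by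
    rw [← ENNReal.ofReal_add ht hs, hts]; simp
  have key : sInf (WppSet μ p x (t • c + s • d)) ≤ ENNReal.ofReal t * A + ENNReal.ofReal s * B := by
    refine ENNReal.le_of_forall_pos_le_add fun ε hε hlt => ?_
    have hεne : (ε : ENNReal) ≠ 0 := by exact_mod_cast hε.ne'
    obtain ⟨I, hImem, hIlt⟩ := sInf_lt_iff.mp (ENNReal.lt_add_right hAfin hεne)
    obtain ⟨J, hJmem, hJlt⟩ := sInf_lt_iff.mp (ENNReal.lt_add_right hBfin hεne)
    calc sInf (WppSet μ p x (t • c + s • d))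
        ≤ ENNReal.ofReal t * I + ENNReal.ofReal s * J :=
          sInf_le (comb_mem μ p x hc.1 hd.1 ht hs hts hImem hJmem)
      _ ≤ ENNReal.ofReal t * (A + ε) + ENNReal.ofReal s * (B + ε) := by
          exact add_le_add (mul_le_mul_right hIlt.le _) (mul_le_mul_right hJlt.le _)
      _ = (ENNReal.ofReal t * A + ENNReal.ofReal s * B) +
            (ENNReal.ofReal t + ENNReal.ofReal s) * ε := by ring
      _ = ENNReal.ofReal t * A + ENNReal.ofReal s * B + ε := by rw [h1, one_mul]
  have hRfin : ENNReal.ofReal t * A + ENNReal.ofReal s * B ≠ ⊤ := by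
    simp [ENNReal.add_ne_top, ENNReal.mul_ne_top, ENNReal.ofReal_ne_top, hAfin, hBfin]
  calc WppAtomic μ p x (t • c + s • d)
      = (sInf (WppSet μ p x (t • c + s • d))).toReal := rfl
    _ ≤ (ENNReal.ofReal t * A + ENNReal.ofReal s * B).toReal := ENNReal.toReal_mono hRfin key
    _ = t * A.toReal + s * B.toReal := by
        rw [ENNReal.toReal_add (ENNReal.mul_ne_top ENNReal.ofReal_ne_top hAfin)
          (ENNReal.mul_ne_top ENNReal.ofReal_ne_top hBfin), ENNReal.toReal_mul,
          ENNReal.toReal_mul, ENNReal.toReal_ofReal ht, ENNReal.toReal_ofReal hs]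
    _ = t • WppAtomic μ p x c + s • WppAtomic μ p x d := rfl
end

section
/- Consider Ω = [0,1], uniform density, two locations x₁ = 0, x₂ = 1, cost c(x,xᵢ) = |x − xᵢ| plus congestion costs s₁ ≡ 100 and s₂(t) = 0 for t ≤ 0.999, s₂(t) = 1 for t > 0.999. Then the cell configuration C₁ = ∅, C₂ = [0,1] is a Wardrop equilibrium (no user at any x can strictly decrease its individual cost |x − xᵢ| + sᵢ(Nᵢ) by switching), while the total-cost-minimizing configuration assigns a nonempty set to C₁; hence the equilibrium total cost strictly exceeds the optimal total cost. -/
open MeasureTheory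

/-- Congestion cost of station 2. -/
noncomputable def s₂ (t : ℝ) : ℝ := if t ≤ 0.999 then 0 else 1

/-- Congestion cost of station 1. -/
noncomputable def s₁ (_t : ℝ) : ℝ := 100

/-- Total cost of a configuration `(C₁, C₂)` on `[0,1]` with stations at `0`, `1`. -/
noncomputable def totalCost (C₁ C₂ : Set ℝ) : ℝ :=
  (∫ x in C₁, (|x - 0| + s₁ ((volume C₁).toReal))) +
    (∫ x in C₂, (|x - 1| + s₂ ((volume C₂).toReal)))

lemma aux_int1 : ∫ x in Set.Icc (0:ℝ) 1, (|x - 1| + 1) = 3/2 := by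
  rw [MeasureTheory.integral_Icc_eq_integral_Ioc]
  have h1 : ∀ x ∈ Set.Ioc (0:ℝ) 1, |x - 1| + 1 = 2 - x := by
    intro x hx
    rw [abs_of_nonpos (by linarith [hx.2])]
    ring
  rw [MeasureTheory.setIntegral_congr_fun measurableSet_Ioc h1,
    ← intervalIntegral.integral_of_le (by norm_num : (0:ℝ) ≤ 1)]
  rw [intervalIntegral.integral_sub intervalIntegrable_const
    intervalIntegral.intervalIntegrable_id]
  simp [integral_id]
  norm_num

lemma aux_int2 : ∫ x in Set.Icc (0:ℝ) (1/1000), (|x - 0| + 100) = 1/2000000 + 1/10 := by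
  rw [MeasureTheory.integral_Icc_eq_integral_Ioc]
  have h1 : ∀ x ∈ Set.Ioc (0:ℝ) (1/1000), |x - 0| + 100 = x + 100 := by
    intro x hx
    rw [sub_zero, abs_of_nonneg (le_of_lt hx.1)]
  rw [MeasureTheory.setIntegral_congr_fun measurableSet_Ioc h1,
    ← intervalIntegral.integral_of_le (by norm_num : (0:ℝ) ≤ 1/1000)]
  rw [intervalIntegral.integral_add intervalIntegral.intervalIntegrable_id
    intervalIntegrable_const]
  simp [integral_id]
  norm_num

lemma aux_int3 : ∫ x in Set.Ioc (1/1000:ℝ) 1, (|x - 1| + 0) = 1/2 - 1/1000 + 1/2000000 := by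
  have h1 : ∀ x ∈ Set.Ioc (1/1000:ℝ) 1, |x - 1| + 0 = 1 - x := by
    intro x hx
    rw [abs_of_nonpos (by linarith [hx.2])]
    ring
  rw [MeasureTheory.setIntegral_congr_fun measurableSet_Ioc h1,
    ← intervalIntegral.integral_of_le (by norm_num : (1/1000:ℝ) ≤ 1)]
  rw [intervalIntegral.integral_sub intervalIntegrable_const
    intervalIntegral.intervalIntegrable_id]
  simp [integral_id]
  norm_num

/-- The configuration `C₁ = ∅`, `C₂ = [0,1]` is a Wardrop equilibrium (no user
can strictly reduce its individual cost by switching stations), but its total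
cost strictly exceeds the total cost of some other partition of `[0,1]`
(which assigns a nonempty cell to station 1); hence the equilibrium is
strictly suboptimal. -/
theorem wardrop_equilibrium_suboptimal :
    (∀ x ∈ Set.Icc (0:ℝ) 1,
        |x - 1| + s₂ ((volume (Set.Icc (0:ℝ) 1)).toReal) ≤
          |x - 0| + s₁ ((volume (∅ : Set ℝ)).toReal)) ∧
    ∃ C₁ C₂ : Set ℝ, MeasurableSet C₁ ∧ MeasurableSet C₂ ∧
      Disjoint C₁ C₂ ∧ C₁ ∪ C₂ = Set.Icc (0:ℝ) 1 ∧ C₁.Nonempty ∧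
      totalCost C₁ C₂ < totalCost (∅ : Set ℝ) (Set.Icc (0:ℝ) 1) := by
  have hvol1 : (volume (Set.Icc (0:ℝ) 1)).toReal = 1 := by
    rw [Real.volume_Icc]; norm_num
  have hs2_1 : s₂ ((volume (Set.Icc (0:ℝ) 1)).toReal) = 1 := by
    rw [hvol1, s₂]; norm_num
  constructor
  · intro x hx
    rw [hs2_1, s₁, sub_zero, abs_of_nonneg hx.1,
      abs_of_nonpos (by linarith [hx.2])]
    linarith [hx.1, hx.2]
  · refine ⟨Set.Icc 0 (1/1000), Set.Ioc (1/1000) 1, measurableSet_Icc,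
      measurableSet_Ioc, ?_, ?_, ⟨0, by norm_num⟩, ?_⟩
    · rw [Set.disjoint_left]
      rintro x ⟨_, h1⟩ ⟨h2, _⟩
      linarith
    · rw [Set.Icc_union_Ioc_eq_Icc] <;> norm_num
    · have hvA : (volume (Set.Icc (0:ℝ) (1/1000))).toReal = 1/1000 := by
        rw [Real.volume_Icc]; norm_num
      have hvB : (volume (Set.Ioc (1/1000:ℝ) 1)).toReal = 999/1000 := by
        rw [Real.volume_Ioc]; norm_num
      have hs1 : s₁ ((volume (Set.Icc (0:ℝ) (1/1000))).toReal) = 100 := rfl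
      have hs2 : s₂ ((volume (Set.Ioc (1/1000:ℝ) 1)).toReal) = 0 := by
        rw [hvB, s₂]; norm_num
      rw [totalCost, totalCost, hs1, hs2, hs2_1, aux_int1, aux_int2, aux_int3,
        MeasureTheory.setIntegral_empty]
      norm_num
end
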